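/- Let G be a group and N a normal subgroup such that the extension N → G → G/N has trivial twisting, i.e. for every g ∈ G, conjugation by g restricted to N is an inner automorphism of N. Then the group of automorphisms of G that restrict to the identity on N and induce the identity on G/N is isomorphic to Hom(G/N, Z(N)), the group of homomorphisms from G/N to the center of N, via f ↦ (g ↦ f(gN)·g). (Kernel statement of Proposition 4.1.) -/

import Mathlib

set_option linter.unusedSectionVars false

section AuxTrivialTwisting

variable {G : Type*} [Group G] (N : Subgroup G) [N.Normal]

theorem aux_centG (htw : ∀ g : G, ∃ n ∈ N, ∀ m ∈ N, g * m * g⁻¹ = n * m * n⁻¹)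
    {z : G} (hzN : z ∈ N) (hz : ∀ m ∈ N, z * m = m * z) (g : G) :
    g * z = z * g := by
  obtain ⟨n, hnN, hn⟩ := htw g
  have h2 : n * z * n⁻¹ = z := by rw [← hz n hnN]; group
  have h3 : g * z * g⁻¹ = z := (hn z hzN).trans h2
  calc g * z = (g * z * g⁻¹) * g := by group
    _ = z * g := by rw [h3]

theorem aux_commG (htw : ∀ g : G, ∃ n ∈ N, ∀ m ∈ N, g * m * g⁻¹ = n * m * n⁻¹)
    (z : ↥(Subgroup.center ↥N)) (g : G) :
    g * ((z : ↥N) : G) = ((z : ↥N) : G) * g := by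
  refine aux_centG N htw (z : ↥N).2 ?_ g
  intro m hm
  exact congrArg Subtype.val (Subgroup.mem_center_iff.mp z.2 ⟨m, hm⟩).symm

theorem aux_mk_mul {a : G} (ha : a ∈ N) (g : G) : ((a * g : G) : G ⧸ N) = (g : G ⧸ N) := by
  rw [QuotientGroup.mk_mul, (QuotientGroup.eq_one_iff a).mpr ha, one_mul]

/-- The automorphism `g ↦ f(gN) * g` associated to a homomorphism `f : G/N → Z(N)`. -/
def auxToAut (htw : ∀ g : G, ∃ n ∈ N, ∀ m ∈ N, g * m * g⁻¹ = n * m * n⁻¹)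
    (f : (G ⧸ N) →* ↥(Subgroup.center ↥N)) : MulAut G where
  toFun g := ((f (g : G ⧸ N) : ↥N) : G) * g
  invFun g := (((f (g : G ⧸ N) : ↥N) : G))⁻¹ * g
  left_inv g := by
    simp only [aux_mk_mul N (f (g : G ⧸ N) : ↥N).2 g, inv_mul_cancel_left]
  right_inv g := by
    have h : (((((f (g : G ⧸ N) : ↥N) : G))⁻¹ * g : G) : G ⧸ N) = (g : G ⧸ N) :=
      aux_mk_mul N (N.inv_mem (f (g : G ⧸ N) : ↥N).2) g
    simp only [h, mul_inv_cancel_left]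
  map_mul' g h := by
    simp only [QuotientGroup.mk_mul, map_mul]
    push_cast
    rw [mul_assoc, mul_assoc, ← mul_assoc g, aux_commG N htw (f (h : G ⧸ N)) g, mul_assoc]

theorem auxToAut_mem (htw : ∀ g : G, ∃ n ∈ N, ∀ m ∈ N, g * m * g⁻¹ = n * m * n⁻¹)
    (K : Subgroup (MulAut G))
    (hK : ∀ φ : MulAut G, φ ∈ K ↔
      (∀ n ∈ N, φ n = n) ∧
      (∀ g : G, ((φ g : G) : G ⧸ N) = ((g : G) : G ⧸ N)))
    (f : (G ⧸ N) →* ↥(Subgroup.center ↥N)) : auxToAut N htw f ∈ K := by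
  rw [hK]
  constructor
  · intro n hn
    show ((f (n : G ⧸ N) : ↥N) : G) * n = n
    rw [(QuotientGroup.eq_one_iff n).mpr hn, map_one]
    simp
  · intro g
    exact aux_mk_mul N (f (g : G ⧸ N) : ↥N).2 g

theorem aux_memN (φ : MulAut G)
    (h2 : ∀ g : G, ((φ g : G) : G ⧸ N) = ((g : G) : G ⧸ N)) (g : G) :
    φ g * g⁻¹ ∈ N := by
  have h := QuotientGroup.eq.mp (h2 g)
  have h3 := Subgroup.Normal.conj_mem ‹N.Normal› _ h g
  have h4 := N.inv_mem h3
  simpa [mul_assoc] using h4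

theorem aux_commN (φ : MulAut G) (h1 : ∀ n ∈ N, φ n = n) (g : G)
    {m : G} (hm : m ∈ N) : (φ g * g⁻¹) * m = m * (φ g * g⁻¹) := by
  have hm0 : g⁻¹ * m * g ∈ N := Subgroup.Normal.conj_mem' ‹N.Normal› _ hm g
  have key : φ g * (g⁻¹ * m * g) * (φ g)⁻¹ = m := by
    have e1 : φ g * (g⁻¹ * m * g) * (φ g)⁻¹ = φ (g * (g⁻¹ * m * g) * g⁻¹) := by
      rw [map_mul, map_mul, map_inv]
      rw [h1 _ hm0]
    rw [e1]
    have h5 : g * (g⁻¹ * m * g) * g⁻¹ = m := by group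
    rw [h5, h1 _ hm]
  calc (φ g * g⁻¹) * m = (φ g * (g⁻¹ * m * g) * (φ g)⁻¹) * (φ g * g⁻¹) := by group
    _ = m * (φ g * g⁻¹) := by rw [key]

/-- The homomorphism `G → Z(N)`, `g ↦ φ(g) g⁻¹`, associated to `φ ∈ K`. -/
def auxRaw (htw : ∀ g : G, ∃ n ∈ N, ∀ m ∈ N, g * m * g⁻¹ = n * m * n⁻¹)
    (φ : MulAut G) (h1 : ∀ n ∈ N, φ n = n)
    (h2 : ∀ g : G, ((φ g : G) : G ⧸ N) = ((g : G) : G ⧸ N)) :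
    G →* ↥(Subgroup.center ↥N) where
  toFun g := ⟨⟨φ g * g⁻¹, aux_memN N φ h2 g⟩, by
    rw [Subgroup.mem_center_iff]
    rintro ⟨m, hm⟩
    exact Subtype.ext (aux_commN N φ h1 g hm).symm⟩
  map_one' := by
    ext; simp
  map_mul' g h := by
    ext
    show φ (g * h) * (g * h)⁻¹ = (φ g * g⁻¹) * (φ h * h⁻¹)
    have hc : g⁻¹ * (φ h * h⁻¹) = (φ h * h⁻¹) * g⁻¹ :=
      aux_centG N htw (aux_memN N φ h2 h) (fun m hm => aux_commN N φ h1 h hm) g⁻¹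
    rw [map_mul, mul_inv_rev]
    have e : (φ g * g⁻¹) * (φ h * h⁻¹) = φ g * (g⁻¹ * (φ h * h⁻¹)) := by group
    rw [e, hc]
    group

/-- The induced homomorphism `G/N → Z(N)` associated to `φ ∈ K`. -/
def auxHomOf (htw : ∀ g : G, ∃ n ∈ N, ∀ m ∈ N, g * m * g⁻¹ = n * m * n⁻¹)
    (φ : MulAut G) (h1 : ∀ n ∈ N, φ n = n)
    (h2 : ∀ g : G, ((φ g : G) : G ⧸ N) = ((g : G) : G ⧸ N)) :
    (G ⧸ N) →* ↥(Subgroup.center ↥N) :=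
  QuotientGroup.lift N (auxRaw N htw φ h1 h2) (by
    intro n hn
    ext
    show φ n * n⁻¹ = 1
    rw [h1 n hn, mul_inv_cancel])

theorem auxHomOf_mk (htw : ∀ g : G, ∃ n ∈ N, ∀ m ∈ N, g * m * g⁻¹ = n * m * n⁻¹)
    (φ : MulAut G) (h1 : ∀ n ∈ N, φ n = n)
    (h2 : ∀ g : G, ((φ g : G) : G ⧸ N) = ((g : G) : G ⧸ N)) (g : G) :
    ((auxHomOf N htw φ h1 h2 (g : G ⧸ N) : ↥N) : G) = φ g * g⁻¹ := rfl

end AuxTrivialTwisting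

open scoped IsMulCommutative

/-- **Kernel statement of Proposition 4.1.** Let `G` be a group and `N` a normal
subgroup such that the extension `N → G → G/N` has trivial twisting: for every `g ∈ G`,
conjugation by `g` restricted to `N` agrees with conjugation by some element `n ∈ N`.
Then the group `K` of automorphisms of `G` restricting to the identity on `N` and
inducing the identity on `G/N` is isomorphic to `Hom(G/N, Z(N))`, via
`f ↦ (g ↦ f(gN) · g)`. -/
theorem trivial_twisting_kernel_iso_hom {G : Type*} [Group G] (N : Subgroup G) [N.Normal]
    (htw : ∀ g : G, ∃ n ∈ N, ∀ m ∈ N, g * m * g⁻¹ = n * m * n⁻¹)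
    (K : Subgroup (MulAut G))
    (hK : ∀ φ : MulAut G, φ ∈ K ↔
      (∀ n ∈ N, φ n = n) ∧
      (∀ g : G, ((φ g : G) : G ⧸ N) = ((g : G) : G ⧸ N))) :
    ∃ e : ((G ⧸ N) →* ↥(Subgroup.center ↥N)) ≃* K,
      ∀ (f : (G ⧸ N) →* ↥(Subgroup.center ↥N)) (g : G),
        ((e f : MulAut G)) g = ((f ((g : G ⧸ N)) : ↥N) : G) * g := by
  refine ⟨{
    toFun := fun f => ⟨auxToAut N htw f, auxToAut_mem N htw K hK f⟩
    invFun := fun φ => auxHomOf N htw φ ((hK φ).mp φ.2).1 ((hK φ).mp φ.2).2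
    left_inv := ?_
    right_inv := ?_
    map_mul' := ?_ }, ?_⟩
  · intro f
    refine MonoidHom.ext fun q => ?_
    induction q using QuotientGroup.induction_on with
    | H g =>
      refine Subtype.ext (Subtype.ext ?_)
      rw [auxHomOf_mk]
      show (((f (g : G ⧸ N) : ↥N) : G) * g) * g⁻¹ = ((f (g : G ⧸ N) : ↥N) : G)
      rw [mul_inv_cancel_right]
  · rintro ⟨φ, hφ⟩
    refine Subtype.ext (MulEquiv.ext fun g => ?_)
    show ((auxHomOf N htw φ _ _ (g : G ⧸ N) : ↥N) : G) * g = φ g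
    rw [auxHomOf_mk, inv_mul_cancel_right]
  · intro f₁ f₂
    refine Subtype.ext (MulEquiv.ext fun g => ?_)
    show ((auxToAut N htw (f₁ * f₂))) g
        = (auxToAut N htw f₁) ((auxToAut N htw f₂) g)
    show (((f₁ * f₂) (g : G ⧸ N) : ↥N) : G) * g
        = ((f₁ ((((f₂ (g : G ⧸ N) : ↥N) : G) * g : G) : G ⧸ N) : ↥N) : G)
          * (((f₂ (g : G ⧸ N) : ↥N) : G) * g)
    rw [aux_mk_mul N (f₂ (g : G ⧸ N) : ↥N).2 g]
    rw [MonoidHom.mul_apply]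
    push_cast
    rw [mul_assoc]
  · intro f g
    rfl
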